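/- Let W ∈ ℝ^{n×n} be symmetric positive definite with smallest eigenvalue ν₁ and largest eigenvalue ν_n, and let T ∈ ℝ^{n×n} be symmetric positive definite with smallest eigenvalue μ₁ > 0 and largest eigenvalue μ_n. Let λ ∈ ℂ and u = (x; y) ∈ ℂ^{2n} with u ≠ 0 satisfy 𝒜u = λ𝒢_α u, where 𝒜 = [[W, −T], [T, W]] and 𝒢_α = [[W, 0], [αI, W]] for some α > 0. Suppose y ≠ 0 and that if b ≠ 0 then α ≤ (2/b)(√(a(a + c)) − a), where a = (y*Ty)/(y*y), b = (y*TW⁻²Ty)/(y*y), c = (y*TW⁻¹TW⁻¹Ty)/(y*y). Then |λ − 1| ≤ √((μ_n³ν_n² − αμ₁²ν₁²)/(ν₁²ν_n²μ₁)). -/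

import Mathlib

open Matrix Finset

lemma real_spectral_coords {n : ℕ} {M : Matrix (Fin n) (Fin n) ℝ} (hM : M.IsHermitian)
    (v : Fin n → ℝ) :
    ∃ w : Fin n → ℝ,
      v ⬝ᵥ v = ∑ i, (w i) ^ 2 ∧
      v ⬝ᵥ (M *ᵥ v) = ∑ i, hM.eigenvalues i * (w i) ^ 2 ∧
      (M *ᵥ v) ⬝ᵥ (M *ᵥ v) = ∑ i, (hM.eigenvalues i) ^ 2 * (w i) ^ 2 := by
  set P : Matrix (Fin n) (Fin n) ℝ := ↑hM.eigenvectorUnitary with hP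
  have h1 := hM.eigenvectorUnitary.2
  rw [Unitary.mem_iff] at h1
  have hPt : Pᵀ * P = 1 := by
    have := h1.1
    rwa [Matrix.star_eq_conjTranspose, Matrix.conjTranspose_eq_transpose_of_trivial] at this
  have hPPt : P * Pᵀ = 1 := by
    have := h1.2
    rwa [Matrix.star_eq_conjTranspose, Matrix.conjTranspose_eq_transpose_of_trivial] at this
  have hspec : M = P * diagonal hM.eigenvalues * Pᵀ := by
    have := hM.spectral_theorem
    rwa [Unitary.conjStarAlgAut_apply, Matrix.star_eq_conjTranspose,
      Matrix.conjTranspose_eq_transpose_of_trivial] at this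
  refine ⟨Pᵀ *ᵥ v, ?_, ?_, ?_⟩
  · have : (Pᵀ *ᵥ v) ⬝ᵥ (Pᵀ *ᵥ v) = v ⬝ᵥ v := by
      rw [mulVec_transpose, ← dotProduct_mulVec, ← mulVec_transpose, mulVec_mulVec, hPPt,
        one_mulVec]
    rw [← this]
    simp [dotProduct, sq]
  · have hMv : M *ᵥ v = P *ᵥ (diagonal hM.eigenvalues *ᵥ (Pᵀ *ᵥ v)) := by
      rw [mulVec_mulVec, mulVec_mulVec, ← hspec]
    rw [hMv, dotProduct_mulVec]
    have : v ᵥ* P = Pᵀ *ᵥ v := (mulVec_transpose P v).symm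
    rw [this]
    simp [dotProduct, mulVec_diagonal, sq]
    exact Finset.sum_congr rfl fun i _ => by ring
  · have hMv : M *ᵥ v = P *ᵥ (diagonal hM.eigenvalues *ᵥ (Pᵀ *ᵥ v)) := by
      rw [mulVec_mulVec, mulVec_mulVec, ← hspec]
    rw [hMv, dotProduct_mulVec]
    have : (P *ᵥ (diagonal hM.eigenvalues *ᵥ (Pᵀ *ᵥ v))) ᵥ* P
        = diagonal hM.eigenvalues *ᵥ (Pᵀ *ᵥ v) := by
      rw [← vecMul_transpose, vecMul_vecMul, hPt, vecMul_one]
    rw [this]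
    simp [dotProduct, mulVec_diagonal, sq]
    exact Finset.sum_congr rfl fun i _ => by ring
open Matrix Finset

lemma mulVec_map_complex {n : ℕ} (M : Matrix (Fin n) (Fin n) ℝ) (v : Fin n → ℂ) (i : Fin n) :
    (M.map Complex.ofReal *ᵥ v) i
      = ((M *ᵥ fun j => (v j).re) i : ℝ) + ((M *ᵥ fun j => (v j).im) i : ℝ) * Complex.I := by
  simp only [mulVec, dotProduct, map_apply, Complex.ofReal_sum, Finset.sum_mul,
    ← Finset.sum_add_distrib, Complex.ofReal_mul]
  refine Finset.sum_congr rfl fun j _ => ?_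
  conv_lhs => rw [← Complex.re_add_im (v j)]
  try ring

lemma dot_re_decomp {n : ℕ} (v z : Fin n → ℂ) :
    (star v ⬝ᵥ z).re = (fun i => (v i).re) ⬝ᵥ (fun i => (z i).re)
      + (fun i => (v i).im) ⬝ᵥ (fun i => (z i).im) := by
  simp only [dotProduct, Pi.star_apply, Complex.re_sum, ← Finset.sum_add_distrib]
  refine Finset.sum_congr rfl fun j _ => ?_
  simp [RCLike.star_def, Complex.mul_re, Complex.mul_im]
  try ring

lemma dot_im_decomp {n : ℕ} (v z : Fin n → ℂ) :
    (star v ⬝ᵥ z).im = (fun i => (v i).re) ⬝ᵥ (fun i => (z i).im)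
      - (fun i => (v i).im) ⬝ᵥ (fun i => (z i).re) := by
  simp only [dotProduct, Pi.star_apply, Complex.im_sum, ← Finset.sum_sub_distrib]
  refine Finset.sum_congr rfl fun j _ => ?_
  simp [RCLike.star_def, Complex.mul_re, Complex.mul_im]
  try ring

lemma hsum_le_low {n : ℕ} {l : ℝ} (f w : Fin n → ℝ) (h : ∀ i, l ≤ f i) :
    l * ∑ i, w i ^ 2 ≤ ∑ i, f i * w i ^ 2 := by
  rw [Finset.mul_sum]
  exact Finset.sum_le_sum fun i _ => mul_le_mul_of_nonneg_right (h i) (sq_nonneg _)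

lemma hsum_le_high {n : ℕ} {r : ℝ} (f w : Fin n → ℝ) (h : ∀ i, f i ≤ r) :
    ∑ i, f i * w i ^ 2 ≤ r * ∑ i, w i ^ 2 := by
  rw [Finset.mul_sum]
  exact Finset.sum_le_sum fun i _ => mul_le_mul_of_nonneg_right (h i) (sq_nonneg _)

lemma cmulVec_re {n : ℕ} (M : Matrix (Fin n) (Fin n) ℝ) (v : Fin n → ℂ) :
    (fun i => ((M.map Complex.ofReal *ᵥ v) i).re) = M *ᵥ (fun j => (v j).re) := by
  funext i
  rw [mulVec_map_complex]
  simp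

lemma cmulVec_im {n : ℕ} (M : Matrix (Fin n) (Fin n) ℝ) (v : Fin n → ℂ) :
    (fun i => ((M.map Complex.ofReal *ᵥ v) i).im) = M *ᵥ (fun j => (v j).im) := by
  funext i
  rw [mulVec_map_complex]
  simp

lemma cquad_bounds {n : ℕ} {M : Matrix (Fin n) (Fin n) ℝ} (hM : M.IsHermitian)
    {l r : ℝ} (hl0 : 0 ≤ l) (hl : ∀ i, l ≤ hM.eigenvalues i) (hr : ∀ i, hM.eigenvalues i ≤ r)
    (v : Fin n → ℂ) :
    l * (star v ⬝ᵥ v).re ≤ (star v ⬝ᵥ (M.map Complex.ofReal *ᵥ v)).re ∧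
    (star v ⬝ᵥ (M.map Complex.ofReal *ᵥ v)).re ≤ r * (star v ⬝ᵥ v).re ∧
    l ^ 2 * (star v ⬝ᵥ v).re
      ≤ (star (M.map Complex.ofReal *ᵥ v) ⬝ᵥ (M.map Complex.ofReal *ᵥ v)).re ∧
    (star (M.map Complex.ofReal *ᵥ v) ⬝ᵥ (M.map Complex.ofReal *ᵥ v)).re
      ≤ r ^ 2 * (star v ⬝ᵥ v).re := by
  set p := fun j => (v j).re with hp
  set q := fun j => (v j).im with hq
  obtain ⟨wp, hp1, hp2, hp3⟩ := real_spectral_coords hM p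
  obtain ⟨wq, hq1, hq2, hq3⟩ := real_spectral_coords hM q
  have e1 : (star v ⬝ᵥ v).re = p ⬝ᵥ p + q ⬝ᵥ q := dot_re_decomp v v
  have e2 : (star v ⬝ᵥ (M.map Complex.ofReal *ᵥ v)).re
      = p ⬝ᵥ (M *ᵥ p) + q ⬝ᵥ (M *ᵥ q) := by
    rw [dot_re_decomp, cmulVec_re, cmulVec_im]
  have e3 : (star (M.map Complex.ofReal *ᵥ v) ⬝ᵥ (M.map Complex.ofReal *ᵥ v)).re
      = (M *ᵥ p) ⬝ᵥ (M *ᵥ p) + (M *ᵥ q) ⬝ᵥ (M *ᵥ q) := by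
    rw [dot_re_decomp, cmulVec_re, cmulVec_im]
  have hl2 : ∀ i, l ^ 2 ≤ (hM.eigenvalues i) ^ 2 := fun i =>
    pow_le_pow_left₀ hl0 (hl i) 2
  have hr2 : ∀ i, (hM.eigenvalues i) ^ 2 ≤ r ^ 2 := fun i => by
    nlinarith [hl i, hr i, hl0]
  refine ⟨?_, ?_, ?_, ?_⟩
  · rw [e1, e2, hp1, hq1, hp2, hq2]
    have := hsum_le_low hM.eigenvalues wp hl
    have := hsum_le_low hM.eigenvalues wq hl
    linarith [this]
  · rw [e1, e2, hp1, hq1, hp2, hq2]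
    have := hsum_le_high hM.eigenvalues wp hr
    have := hsum_le_high hM.eigenvalues wq hr
    linarith [this]
  · rw [e1, e3, hp1, hq1, hp3, hq3]
    have h1 := hsum_le_low (fun i => hM.eigenvalues i ^ 2) wp hl2
    have h2 := hsum_le_low (fun i => hM.eigenvalues i ^ 2) wq hl2
    linarith
  · rw [e1, e3, hp1, hq1, hp3, hq3]
    have h1 := hsum_le_high (fun i => hM.eigenvalues i ^ 2) wp hr2
    have h2 := hsum_le_high (fun i => hM.eigenvalues i ^ 2) wq hr2
    linarith

lemma cquad_im_zero {n : ℕ} {M : Matrix (Fin n) (Fin n) ℝ} (hM : Mᵀ = M) (v : Fin n → ℂ) :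
    (star v ⬝ᵥ (M.map Complex.ofReal *ᵥ v)).im = 0 := by
  rw [dot_im_decomp, cmulVec_re, cmulVec_im]
  have : (fun j => (v j).re) ⬝ᵥ (M *ᵥ fun j => (v j).im)
      = (fun j => (v j).im) ⬝ᵥ (M *ᵥ fun j => (v j).re) := by
    rw [dotProduct_mulVec, ← mulVec_transpose, hM, dotProduct_comm]
  rw [this]
  ring

lemma dot_self_im_zero {n : ℕ} (v : Fin n → ℂ) : (star v ⬝ᵥ v).im = 0 := by
  rw [dot_im_decomp, dotProduct_comm]
  ring

lemma dot_self_re_pos {n : ℕ} {v : Fin n → ℂ} (hv : v ≠ 0) : 0 < (star v ⬝ᵥ v).re := by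
  rw [dot_re_decomp v v]
  obtain ⟨i, hi⟩ : ∃ i, v i ≠ 0 := by
    by_contra h
    push_neg at h
    exact hv (funext h)
  have hterm : 0 < (v i).re * (v i).re + (v i).im * (v i).im := by
    rcases Complex.ext_iff.not.mp hi with _
    have : (v i).re ≠ 0 ∨ (v i).im ≠ 0 := by
      by_contra h
      push_neg at h
      exact hi (Complex.ext h.1 h.2)
    rcases this with h | h
    · nlinarith [sq_nonneg ((v i).im), sq_nonneg ((v i).re), pow_pos (abs_pos.mpr h) 2, sq_abs ((v i).re), sq_abs ((v i).im)]
    · nlinarith [sq_nonneg ((v i).re), pow_pos (abs_pos.mpr h) 2, sq_abs ((v i).re), sq_abs ((v i).im)]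
  simp only [dotProduct]
  rw [← Finset.sum_add_distrib]
  exact Finset.sum_pos' (fun j _ => by nlinarith [sq_nonneg ((v j).re), sq_nonneg ((v j).im)])
    ⟨i, Finset.mem_univ i, hterm⟩

lemma dot_self_re_nonneg {n : ℕ} (v : Fin n → ℂ) : 0 ≤ (star v ⬝ᵥ v).re := by
  rcases eq_or_ne v 0 with rfl | h
  · simp
  · exact (dot_self_re_pos h).le

lemma herm_shift {n : ℕ} {M : Matrix (Fin n) (Fin n) ℂ} (hH : Mᴴ = M) (u z : Fin n → ℂ) :
    star u ⬝ᵥ (M *ᵥ z) = star (M *ᵥ u) ⬝ᵥ z := by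
  rw [star_mulVec, hH, dotProduct_mulVec]

lemma map_conjT {n : ℕ} {M : Matrix (Fin n) (Fin n) ℝ} (h : Mᵀ = M) :
    (M.map Complex.ofReal)ᴴ = M.map Complex.ofReal := by
  ext i j
  simp only [conjTranspose_apply, map_apply, Complex.star_def, Complex.conj_ofReal]
  conv_rhs => rw [← h]
  simp [transpose_apply]

set_option maxHeartbeats 2000000 in
/-- Theorem 2: With `W` symmetric positive definite (extreme
eigenvalues `ν₁, νₙ`) and `T` symmetric positive definite (extreme eigenvalues
`μ₁ > 0, μₙ`), for any eigenpair `(λ, (x; y))` of `𝒢_α⁻¹𝒜` with `α > 0`, `y ≠ 0`,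
and `α ≤ (2/b)(√(a(a+c)) - a)` whenever `b ≠ 0`, the eigenvalue `λ` satisfies
`|λ - 1| ≤ √((μₙ³νₙ² - αμ₁²ν₁²)/(ν₁²νₙ²μ₁))`. -/
theorem blt_eigen_uniform_disk {n : ℕ} (W T : Matrix (Fin n) (Fin n) ℝ)
    (hW : W.PosDef) (hT : T.PosDef) (ν₁ νₙ μ₁ μₙ : ℝ)
    (hν₁ : IsLeast (Set.range hW.1.eigenvalues) ν₁)
    (hνₙ : IsGreatest (Set.range hW.1.eigenvalues) νₙ)
    (hμ₁ : IsLeast (Set.range hT.1.eigenvalues) μ₁)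
    (hμₙ : IsGreatest (Set.range hT.1.eigenvalues) μₙ)
    (hμ₁pos : 0 < μ₁)
    (α : ℝ) (hα : 0 < α) (lam : ℂ) (x y : Fin n → ℂ)
    (hu : Sum.elim x y ≠ 0)
    (heig : Matrix.fromBlocks (W.map Complex.ofReal) (-(T.map Complex.ofReal))
        (T.map Complex.ofReal) (W.map Complex.ofReal) *ᵥ Sum.elim x y
      = lam • (Matrix.fromBlocks (W.map Complex.ofReal) 0 ((α : ℂ) • 1)
        (W.map Complex.ofReal) *ᵥ Sum.elim x y))
    (hy : y ≠ 0) (a b c : ℝ)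
    (ha : a = ((star y ⬝ᵥ (T.map Complex.ofReal *ᵥ y)) / (star y ⬝ᵥ y)).re)
    (hb : b = ((star y ⬝ᵥ ((T.map Complex.ofReal * (W.map Complex.ofReal)⁻¹ ^ 2
        * T.map Complex.ofReal) *ᵥ y)) / (star y ⬝ᵥ y)).re)
    (hc : c = ((star y ⬝ᵥ ((T.map Complex.ofReal * (W.map Complex.ofReal)⁻¹
        * T.map Complex.ofReal * (W.map Complex.ofReal)⁻¹
        * T.map Complex.ofReal) *ᵥ y)) / (star y ⬝ᵥ y)).re)
    (hαle : b ≠ 0 → α ≤ (2 / b) * (Real.sqrt (a * (a + c)) - a)) :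
    ‖lam - 1‖
      ≤ Real.sqrt ((μₙ ^ 3 * νₙ ^ 2 - α * μ₁ ^ 2 * ν₁ ^ 2)
          / (ν₁ ^ 2 * νₙ ^ 2 * μ₁)) := by
  set Wc := W.map Complex.ofReal with hWc
  set Tc := T.map Complex.ofReal with hTc
  -- symmetry facts
  have hWt : Wᵀ = W := by
    have := hW.1; rwa [Matrix.IsHermitian, Matrix.conjTranspose_eq_transpose_of_trivial] at this
  have hTt : Tᵀ = T := by
    have := hT.1; rwa [Matrix.IsHermitian, Matrix.conjTranspose_eq_transpose_of_trivial] at this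
  have hWcH : Wcᴴ = Wc := map_conjT hWt
  have hTcH : Tcᴴ = Tc := map_conjT hTt
  -- invertibility
  have hdet : IsUnit Wc.det := by
    have h1 : Wc.det = (W.det : ℂ) := by
      rw [hWc, show (Complex.ofReal : ℝ → ℂ) = ⇑Complex.ofRealHom from rfl,
        ← RingHom.mapMatrix_apply, ← RingHom.map_det]
    rw [h1, isUnit_iff_ne_zero]
    exact_mod_cast hW.det_pos.ne'
  have hinv1 : Wc⁻¹ * Wc = 1 := nonsing_inv_mul _ hdet
  have hinv2 : Wc * Wc⁻¹ = 1 := mul_nonsing_inv _ hdet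
  have hWinvH : (Wc⁻¹)ᴴ = Wc⁻¹ := by rw [conjTranspose_nonsing_inv, hWcH]
  -- block equations
  have htop : Wc *ᵥ x - Tc *ᵥ y = lam • (Wc *ᵥ x) := by
    funext i
    have h := congrFun heig (Sum.inl i)
    rw [fromBlocks_mulVec, fromBlocks_mulVec] at h
    simpa [Sum.elim_comp_inl, Sum.elim_comp_inr, neg_mulVec, sub_eq_add_neg] using h
  have hbot : Tc *ᵥ x + Wc *ᵥ y = lam • ((α : ℂ) • x + Wc *ᵥ y) := by
    funext i
    have h := congrFun heig (Sum.inr i)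
    rw [fromBlocks_mulVec, fromBlocks_mulVec] at h
    simpa [Sum.elim_comp_inl, Sum.elim_comp_inr, smul_mulVec, one_mulVec] using h
  -- the vector w
  set z := Tc *ᵥ y with hz
  set w := Wc⁻¹ *ᵥ z with hw
  have hWcw : Wc *ᵥ w = z := by
    rw [hw, mulVec_mulVec, hinv2, one_mulVec]
  have hxw : w = (1 - lam) • x := by
    have h1 : Wc *ᵥ ((1 - lam) • x) = z := by
      rw [mulVec_smul]
      have : z = Wc *ᵥ x - lam • (Wc *ᵥ x) := by
        rw [hz]
        have := htop
        funext i
        have h := congrFun this i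
        simp only [Pi.sub_apply, Pi.smul_apply, smul_eq_mul] at h ⊢
        linear_combination -h
      rw [this]
      module
    rw [hw, ← h1, mulVec_mulVec, hinv1, one_mulVec]
  have hbot' : Tc *ᵥ x - (lam * α) • x = (lam - 1) • (Wc *ᵥ y) := by
    funext i
    have h := congrFun hbot i
    simp only [Pi.add_apply, Pi.sub_apply, Pi.smul_apply, smul_eq_mul] at h ⊢
    linear_combination h
  have hE : Tc *ᵥ w - (lam * α) • w = (-((lam - 1) ^ 2)) • (Wc *ᵥ y) := by
    rw [hxw, mulVec_smul]
    rw [show ((1:ℂ) - lam) • (Tc *ᵥ x) - (lam * α) • ((1 - lam) • x)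
        = (1 - lam) • (Tc *ᵥ x - (lam * α) • x) from by module, hbot', smul_smul]
    rw [show ((1:ℂ) - lam) * (lam - 1) = -((lam - 1) ^ 2) from by ring]
  -- scalar equation
  have hscal : star w ⬝ᵥ (Tc *ᵥ w) - lam * α * (star w ⬝ᵥ w)
      = (-((lam - 1) ^ 2)) * (star w ⬝ᵥ (Wc *ᵥ y)) := by
    have h := congrArg (fun u => star w ⬝ᵥ u) hE
    simpa [dotProduct_sub, dotProduct_smul, smul_eq_mul] using h
  -- identifications
  have hA : star w ⬝ᵥ (Wc *ᵥ y) = star y ⬝ᵥ (Tc *ᵥ y) := by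
    rw [herm_shift hWcH, hWcw, hz, herm_shift hTcH]
  have hB : star w ⬝ᵥ w = star y ⬝ᵥ ((Tc * Wc⁻¹ ^ 2 * Tc) *ᵥ y) := by
    have h1 : (Tc * Wc⁻¹ ^ 2 * Tc) *ᵥ y = Tc *ᵥ (Wc⁻¹ *ᵥ (Wc⁻¹ *ᵥ (Tc *ᵥ y))) := by
      rw [pow_two]
      simp only [← mulVec_mulVec]
    rw [h1, herm_shift hTcH y, herm_shift hWinvH (Tc *ᵥ y)]
  have hC : star w ⬝ᵥ (Tc *ᵥ w) = star y ⬝ᵥ ((Tc * Wc⁻¹ * Tc * Wc⁻¹ * Tc) *ᵥ y) := by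
    have h1 : (Tc * Wc⁻¹ * Tc * Wc⁻¹ * Tc) *ᵥ y
        = Tc *ᵥ (Wc⁻¹ *ᵥ (Tc *ᵥ (Wc⁻¹ *ᵥ (Tc *ᵥ y)))) := by
      simp only [← mulVec_mulVec]
    rw [h1, herm_shift hTcH y, herm_shift hWinvH (Tc *ᵥ y)]
  -- real values
  set Yr := (star y ⬝ᵥ y).re with hYrdef
  have hYpos : 0 < Yr := dot_self_re_pos hy
  have hYeq : (star y ⬝ᵥ y) = (Yr : ℂ) := by
    apply Complex.ext
    · simp [hYrdef]
    · simpa using dot_self_im_zero y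
  have hYne : (Yr : ℂ) ≠ 0 := by exact_mod_cast hYpos.ne'
  have hAeq : star y ⬝ᵥ (Tc *ᵥ y) = ((a * Yr : ℝ) : ℂ) := by
    have him : (star y ⬝ᵥ (Tc *ᵥ y)).im = 0 := cquad_im_zero hTt y
    have hself : star y ⬝ᵥ (Tc *ᵥ y) = (((star y ⬝ᵥ (Tc *ᵥ y)).re : ℝ) : ℂ) :=
      Complex.ext (by simp) (by simp [him])
    have hare : a = (star y ⬝ᵥ (Tc *ᵥ y)).re / Yr := by
      rw [ha, ← hz]
      conv_lhs => rw [hself, hYeq, ← Complex.ofReal_div]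
      simp [hz]
    rw [hself, hare]
    congr 1
    field_simp
  have hBeq : star w ⬝ᵥ w = ((b * Yr : ℝ) : ℂ) := by
    have him : (star w ⬝ᵥ w).im = 0 := dot_self_im_zero w
    have hself : star w ⬝ᵥ w = (((star w ⬝ᵥ w).re : ℝ) : ℂ) :=
      Complex.ext (by simp) (by simp [him])
    have hare : b = (star w ⬝ᵥ w).re / Yr := by
      rw [hb, ← hB]
      conv_lhs => rw [hself, hYeq, ← Complex.ofReal_div]
      simp
    rw [hself, hare]
    congr 1
    field_simp
  have hCeq : star w ⬝ᵥ (Tc *ᵥ w) = ((c * Yr : ℝ) : ℂ) := by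
    have him : (star w ⬝ᵥ (Tc *ᵥ w)).im = 0 := cquad_im_zero hTt w
    have hself : star w ⬝ᵥ (Tc *ᵥ w) = (((star w ⬝ᵥ (Tc *ᵥ w)).re : ℝ) : ℂ) :=
      Complex.ext (by simp) (by simp [him])
    have hare : c = (star w ⬝ᵥ (Tc *ᵥ w)).re / Yr := by
      rw [hc, ← hC]
      conv_lhs => rw [hself, hYeq, ← Complex.ofReal_div]
      simp
    rw [hself, hare]
    congr 1
    field_simp
  have hquad : (c : ℂ) - lam * α * b = -((lam - 1) ^ 2) * a := by
    apply mul_right_cancel₀ hYne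
    have h := hscal
    rw [hCeq, hBeq, hA, hAeq] at h
    push_cast at h ⊢
    linear_combination h
  -- eigenvalue bounds
  have hTev_low : ∀ i, μ₁ ≤ hT.1.eigenvalues i := fun i => hμ₁.2 ⟨i, rfl⟩
  have hTev_high : ∀ i, hT.1.eigenvalues i ≤ μₙ := fun i => hμₙ.2 ⟨i, rfl⟩
  have hWev_low : ∀ i, ν₁ ≤ hW.1.eigenvalues i := fun i => hν₁.2 ⟨i, rfl⟩
  have hWev_high : ∀ i, hW.1.eigenvalues i ≤ νₙ := fun i => hνₙ.2 ⟨i, rfl⟩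
  have hν₁pos : 0 < ν₁ := by
    obtain ⟨i, hi⟩ := hν₁.1
    rw [← hi]
    exact hW.eigenvalues_pos i
  have hνₙpos : 0 < νₙ := lt_of_lt_of_le hν₁pos (hν₁.2 hνₙ.1)
  have hμₙpos : 0 < μₙ := lt_of_lt_of_le hμ₁pos (hμ₁.2 hμₙ.1)
  have qTy := cquad_bounds hT.1 hμ₁pos.le hTev_low hTev_high y
  have qTw := cquad_bounds hT.1 hμ₁pos.le hTev_low hTev_high w
  have qWw := cquad_bounds hW.1 hν₁pos.le hWev_low hWev_high w
  rw [← hTc, ← hz] at qTy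
  rw [← hTc] at qTw
  rw [← hWc, hWcw] at qWw
  have hAre : (star y ⬝ᵥ (Tc *ᵥ y)).re = a * Yr := by rw [hAeq]; simp
  have hBre : (star w ⬝ᵥ w).re = b * Yr := by rw [hBeq]; simp
  have hCre : (star w ⬝ᵥ (Tc *ᵥ w)).re = c * Yr := by rw [hCeq]; simp
  rw [← hz] at hAre
  have hNw0 : 0 ≤ (star w ⬝ᵥ w).re := dot_self_re_nonneg w
  have hNz0 : 0 ≤ (star z ⬝ᵥ z).re := dot_self_re_nonneg z
  rw [← hYrdef] at qTy
  set Nw := (star w ⬝ᵥ w).re with hNwdef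
  set Nz := (star z ⬝ᵥ z).re with hNzdef
  set Cw := (star w ⬝ᵥ (Tc *ᵥ w)).re with hCwdef
  clear_value Nw Nz Cw Yr w z Tc Wc
  -- real bounds on a, b, c
  have ha' : μ₁ ≤ a := by
    have h := qTy.1
    rw [hAre] at h
    exact le_of_mul_le_mul_right h hYpos
  have hb0 : 0 ≤ b := by
    have h : 0 * Yr ≤ b * Yr := by
      rw [zero_mul, ← hBre]
      exact hNw0
    exact le_of_mul_le_mul_right h hYpos
  have hc0 : 0 ≤ c := by
    have h : 0 * Yr ≤ c * Yr := by
      rw [zero_mul, ← hCre]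
      have := mul_nonneg hμ₁pos.le hNw0
      linarith only [qTw.1, this]
    exact le_of_mul_le_mul_right h hYpos
  have hapos : 0 < a := lt_of_lt_of_le hμ₁pos ha'
  have hbν : μ₁ ^ 2 ≤ b * νₙ ^ 2 := by
    have h2 : Nz ≤ νₙ ^ 2 * (b * Yr) := by
      rw [← hBre]
      exact qWw.2.2.2
    have h : μ₁ ^ 2 * Yr ≤ (b * νₙ ^ 2) * Yr := by linarith only [qTy.2.2.1, h2]
    exact le_of_mul_le_mul_right h hYpos
  have hcν : c * ν₁ ^ 2 ≤ μₙ ^ 3 := by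
    have e1 := mul_le_mul_of_nonneg_left qTw.2.1 (sq_nonneg ν₁)
    have e2 := mul_le_mul_of_nonneg_left (le_trans qWw.2.2.1 qTy.2.2.2) hμₙpos.le
    have h : (c * ν₁ ^ 2) * Yr ≤ μₙ ^ 3 * Yr := by
      rw [hCre] at e1
      linarith only [e1, e2]
    exact le_of_mul_le_mul_right h hYpos
  -- discriminant
  have hdisc : α ^ 2 * b ^ 2 - 4 * a * (c - α * b) ≤ 0 := by
    rcases eq_or_ne b 0 with hbz | hbz
    · rw [hbz]
      have := mul_nonneg hapos.le hc0
      nlinarith only [this, hα]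
    · have hbpos : 0 < b := lt_of_le_of_ne hb0 (Ne.symm hbz)
      have h1 := hαle hbz
      have hs : Real.sqrt (a * (a + c)) ^ 2 = a * (a + c) :=
        Real.sq_sqrt (by nlinarith only [hapos, hc0])
      have h4 : (2 / b) * (Real.sqrt (a * (a + c)) - a) * b
          = 2 * (Real.sqrt (a * (a + c)) - a) := by
        field_simp
      have h3 := mul_le_mul_of_nonneg_right h1 hb0
      rw [h4] at h3
      have h2 : α * b / 2 + a ≤ Real.sqrt (a * (a + c)) := by linarith
      have h6 : 0 ≤ α * b / 2 + a := by
        have := mul_pos hα hbpos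
        linarith only [this, hapos]
      have h7 := mul_self_le_mul_self h6 h2
      have h5 : (α * b / 2 + a) ^ 2 ≤ a * (a + c) := by
        nlinarith only [h7, hs]
      linarith only [h5]
  -- extract real and imaginary parts of the quadratic equation
  rw [Complex.ext_iff] at hquad
  simp only [pow_two, Complex.mul_re, Complex.mul_im, Complex.sub_re, Complex.sub_im,
    Complex.ofReal_re, Complex.ofReal_im, Complex.neg_re, Complex.neg_im,
    Complex.one_re, Complex.one_im] at hquad
  obtain ⟨hre0, him0⟩ := hquad
  have hkey : a * ((lam.re - 1) ^ 2 + lam.im ^ 2) = c - α * b := by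
    rcases eq_or_ne lam.im 0 with hli | hli
    · rw [hli] at hre0
      have hid : (2 * a * (lam.re - 1) - α * b) ^ 2 = α ^ 2 * b ^ 2 - 4 * a * (c - α * b) := by
        linear_combination (4 * a) * hre0
      have h8 : 2 * a * (lam.re - 1) - α * b = 0 := by
        have h0 := le_antisymm (hid ▸ hdisc) (sq_nonneg _)
        exact pow_eq_zero_iff two_ne_zero |>.mp h0
      rw [hli]
      linear_combination -hre0 + (lam.re - 1) * h8
    · have h10 : lam.im * (α * b - 2 * a * (lam.re - 1)) = 0 := by
        linear_combination -him0
      have h9 : α * b - 2 * a * (lam.re - 1) = 0 :=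
        (mul_eq_zero.mp h10).resolve_left hli
      linear_combination -hre0 - (lam.re - 1) * h9
  have hcab : 0 ≤ c - α * b := by
    nlinarith only [hkey, hapos, sq_nonneg (lam.re - 1), sq_nonneg lam.im]
  have hnormsq : Complex.normSq (lam - 1) = (c - α * b) / a := by
    rw [eq_div_iff hapos.ne', Complex.normSq_apply, Complex.sub_re, Complex.sub_im,
      Complex.one_re, Complex.one_im]
    linear_combination hkey
  rw [Complex.norm_def]
  apply Real.sqrt_le_sqrt
  rw [hnormsq, div_le_div_iff₀ hapos
    (mul_pos (mul_pos (pow_pos hν₁pos 2) (pow_pos hνₙpos 2)) hμ₁pos)]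
  have f1 := mul_le_mul_of_nonneg_right hcν (pow_pos hνₙpos 2).le
  have f2 := mul_le_mul_of_nonneg_left hbν (mul_pos hα (pow_pos hν₁pos 2)).le
  have hD0 : 0 ≤ (c - α * b) * (ν₁ ^ 2 * νₙ ^ 2) :=
    mul_nonneg hcab (mul_nonneg (sq_nonneg _) (sq_nonneg _))
  have hDle : (c - α * b) * (ν₁ ^ 2 * νₙ ^ 2) ≤ μₙ ^ 3 * νₙ ^ 2 - α * μ₁ ^ 2 * ν₁ ^ 2 := by
    nlinarith only [f1, f2]
  have g1 := mul_le_mul_of_nonneg_left ha' hD0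
  have g2 := mul_le_mul_of_nonneg_right hDle hapos.le
  nlinarith only [g1, g2]
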